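/- Let s = σ + it be a complex number with 0 < σ < 1, and for ε ≥ 0 define Π_ε(s) := 1/(s+ε) + 1/(conj(s)+ε) + 1/(1-s+ε) + 1/(1-conj(s)+ε). Then with φ = (1+√5)/2, for all s with 0 < Re(s) < 1 we have Π_0(s) > Π_{φ-1}(s)/(2φ-1). -/

import Mathlib

open Complex

/-- The pairing-up function `Π_ε(s)`. -/
noncomputable def pairingUp (ε : ℝ) (s : ℂ) : ℂ :=
  1 / (s + ε) + 1 / ((starRingEnd ℂ) s + ε) + 1 / (1 - s + ε) + 1 / (1 - (starRingEnd ℂ) s + ε)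

lemma inv_re' (w : ℂ) : (1 / w).re = w.re / (w.re ^ 2 + w.im ^ 2) := by
  rw [one_div, Complex.inv_re, Complex.normSq_apply, sq, sq]

lemma pairingUp_re (ε : ℝ) (s : ℂ) :
    (pairingUp ε s).re = 2 * (s.re + ε) / ((s.re + ε) ^ 2 + s.im ^ 2)
      + 2 * (1 - s.re + ε) / ((1 - s.re + ε) ^ 2 + s.im ^ 2) := by
  rw [pairingUp, Complex.add_re, Complex.add_re, Complex.add_re, inv_re', inv_re', inv_re',
    inv_re']
  simp only [Complex.add_re, Complex.add_im, Complex.sub_re, Complex.sub_im, Complex.one_re,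
    Complex.one_im, Complex.ofReal_re, Complex.ofReal_im, Complex.conj_re, Complex.conj_im]
  ring

/-- With `φ = (1+√5)/2`, for all `s` with `0 < Re s < 1` we have
`Π_0(s) > Π_{φ-1}(s)/(2φ-1)`. -/
theorem pairingUp_zero_gt (s : ℂ) (h0 : 0 < s.re) (h1 : s.re < 1) :
    (pairingUp 0 s).re > (pairingUp ((1 + Real.sqrt 5) / 2 - 1) s).re /
      (2 * ((1 + Real.sqrt 5) / 2) - 1) := by
  set q : ℝ := Real.sqrt 5 with hqdef
  have hq : q ^ 2 = 5 := Real.sq_sqrt (by norm_num)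
  have hq2 : 2 < q := by
    nlinarith [Real.sqrt_nonneg 5]
  set σ := s.re with hσ
  set t := s.im with ht
  set e : ℝ := (q - 1) / 2 with hedef
  have he : e ^ 2 + e - 1 = 0 := by rw [hedef]; nlinarith
  have hepos : 0 < e := by rw [hedef]; linarith
  have heps : (1 + q) / 2 - 1 = e := by rw [hedef]; ring
  have hden : 2 * ((1 + q) / 2) - 1 = q := by ring
  rw [heps, hden, pairingUp_re 0 s, pairingUp_re e s]
  simp only [add_zero]
  rw [gt_iff_lt, div_lt_iff₀ (by linarith : (0:ℝ) < q), ← sub_pos]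
  have hqe : q = 2 * e + 1 := by rw [hedef]; ring
  set d1 : ℝ := σ ^ 2 + t ^ 2 with hd1def
  set d2 : ℝ := (1 - σ) ^ 2 + t ^ 2 with hd2def
  set e1 : ℝ := (σ + e) ^ 2 + t ^ 2 with he1def
  set e2 : ℝ := (1 - σ + e) ^ 2 + t ^ 2 with he2def
  have hd1 : 0 < d1 := by rw [hd1def]; positivity
  have hd2 : 0 < d2 := by have : 0 < 1 - σ := by linarith
                          rw [hd2def]; positivity
  have he1 : 0 < e1 := by have : 0 < σ + e := by linarith
                          rw [he1def]; positivity
  have he2 : 0 < e2 := by have : 0 < 1 - σ + e := by linarith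
                          rw [he2def]; positivity
  set u : ℝ := σ * (1 - σ) with hudef
  have hu : 0 < u := by rw [hudef]; nlinarith
  set C : ℝ := 2*t^2*e + 6*t^2*e^2 + 4*t^2*e^3 + 2*t^4 + 4*t^4*e + 2*σ + 6*σ*e + 6*σ*e^2
      + 4*σ*e^3 + 12*σ*t^2 + 24*σ*t^2*e - 2*σ^2*e - 6*σ^2*e^2 - 4*σ^2*e^3 - 12*σ^2*t^2
      - 24*σ^2*t^2*e - 4*σ^3 - 8*σ^3*e + 2*σ^4 + 4*σ^4*e with hCdef
  set N : ℝ := 2*(2*e+1)*(t^4 + 6*u*t^2 + u*(1+u)) + C*(e^2+e-1) with hNdef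
  have hdiff : (2 * σ / d1 + 2 * (1 - σ) / d2) * q
      - (2 * (σ + e) / e1 + 2 * (1 - σ + e) / e2) = N / (d1 * d2 * e1 * e2) := by
    have n1 : σ ^ 2 + t ^ 2 ≠ 0 := hd1.ne'
    have n2 : (1 - σ) ^ 2 + t ^ 2 ≠ 0 := hd2.ne'
    have n3 : (σ + e) ^ 2 + t ^ 2 ≠ 0 := he1.ne'
    have n4 : (1 - σ + e) ^ 2 + t ^ 2 ≠ 0 := he2.ne'
    rw [hNdef, hCdef, hqe, hd1def, hd2def, he1def, he2def, hudef]
    field_simp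
    ring
  have hNpos : 0 < N := by
    rw [hNdef, he, mul_zero, add_zero]
    positivity
  rw [hdiff]
  positivity
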